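/- If Maker, as second player, has a winning strategy in the Maker-Breaker Hamiltonicity game on E(K_n), then Maker, as second player, has a winning strategy in the Fixed Hamiltonian Path game on E(K_{n+2}) for any choice of the two fixed vertices. -/

import Mathlib

/-- `MakerWins X F t M B` : in the Maker-Breaker positional game on board `X` with
winning sets `F`, from the position where Maker has claimed the elements of `M`,
Breaker has claimed the elements of `B`, and it is Maker's turn iff `t = true`,
Maker has a winning strategy (he can ensure to claim all elements of some winning set). -/
inductive MakerWins {α : Type} [DecidableEq α] (X : Finset α) (F : Set (Finset α)) :
    Bool → Finset α → Finset α → Prop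
  | claim {t : Bool} {M B : Finset α} (A : Finset α) (hA : A ∈ F) (hAM : A ⊆ M) :
      MakerWins X F t M B
  | makerMove {M B : Finset α} (e : α) (he : e ∈ X) (heM : e ∉ M) (heB : e ∉ B)
      (h : MakerWins X F false (insert e M) B) : MakerWins X F true M B
  | breakerMove {M B : Finset α} (e : α) (he : e ∈ X) (heM : e ∉ M) (heB : e ∉ B)
      (h : ∀ f ∈ X, f ∉ M → f ∉ B → MakerWins X F true M (insert f B)) :
      MakerWins X F false M B

/-- Maker, moving first, has a winning strategy in the game `(X, F)`. -/
def MakerWinsFirst {α : Type} [DecidableEq α] (X : Finset α) (F : Set (Finset α)) : Prop :=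
  MakerWins X F true ∅ ∅

/-- Maker, moving second (Breaker moves first), has a winning strategy in `(X, F)`. -/
def MakerWinsSecond {α : Type} [DecidableEq α] (X : Finset α) (F : Set (Finset α)) : Prop :=
  MakerWins X F false ∅ ∅

/-- The board of games played on the edge set of the complete graph `K_n`. -/
def Board (n : ℕ) : Finset (Sym2 (Fin n)) := (⊤ : SimpleGraph (Fin n)).edgeFinset

/-- Edge sets of Hamiltonian cycles of `K_n`: the winning sets of the Hamiltonicity game. -/
def HamCycles (n : ℕ) : Set (Finset (Sym2 (Fin n))) :=
  {H | ∃ (a : Fin n) (p : (⊤ : SimpleGraph (Fin n)).Walk a a),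
    p.IsHamiltonianCycle ∧ H = p.edges.toFinset}

/-- Edge sets of Hamiltonian paths of `K_n`: the winning sets of the Hamiltonian Path game. -/
def HamPaths (n : ℕ) : Set (Finset (Sym2 (Fin n))) :=
  {H | ∃ (a b : Fin n) (p : (⊤ : SimpleGraph (Fin n)).Walk a b),
    p.IsHamiltonian ∧ H = p.edges.toFinset}

/-- Edge sets of Hamiltonian paths of `K_n` with endpoints `u` and `v`:
the winning sets of the Fixed Hamiltonian Path game. -/
def FixedHamPaths (n : ℕ) (u v : Fin n) : Set (Finset (Sym2 (Fin n))) :=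
  {H | ∃ p : (⊤ : SimpleGraph (Fin n)).Walk u v, p.IsHamiltonian ∧ H = p.edges.toFinset}

open SimpleGraph

lemma makerWins_aux {α : Type} [DecidableEq α] {X : Finset α} {F : Set (Finset α)}
    {t : Bool} {M B : Finset α} (h : MakerWins X F t M B) :
    (∀ e ∉ B, MakerWins X F t (insert e M) B) ∧ (t = false → MakerWins X F true M B) := by
  induction h with
  | @claim t M B A hA hAM =>
    exact ⟨fun e _ => .claim A hA (hAM.trans (Finset.subset_insert _ _)),
      fun _ => .claim A hA hAM⟩
  | @makerMove M B f hfX hfM hfB h ih =>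
    refine ⟨?_, by simp⟩
    intro e heB
    by_cases heM : e ∈ M
    · rw [Finset.insert_eq_self.2 heM]; exact .makerMove f hfX hfM hfB h
    by_cases hef : e = f
    · subst hef; exact ih.2 rfl
    · refine .makerMove f hfX (by simp [hfM, Ne.symm hef]) hfB ?_
      rw [Finset.insert_comm]
      exact ih.1 e heB
  | @breakerMove M B f hfX hfM hfB h ih =>
    have part1 : ∀ e ∉ B, MakerWins X F false (insert e M) B := by
      intro e heB
      by_cases heM : e ∈ M
      · rw [Finset.insert_eq_self.2 heM]; exact .breakerMove f hfX hfM hfB h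
      by_cases hex : ∃ f', f' ∈ X ∧ f' ∉ insert e M ∧ f' ∉ B
      · obtain ⟨f', h1, h2, h3⟩ := hex
        refine .breakerMove f' h1 h2 h3 ?_
        intro g hgX hgM hgB
        have hge : g ≠ e := fun hh => hgM (hh ▸ Finset.mem_insert_self e M)
        have hgM0 : g ∉ M := fun hh => hgM (Finset.mem_insert_of_mem hh)
        exact (ih g hgX hgM0 hgB).1 e (by simp [heB, Ne.symm hge])
      · push_neg at hex
        have hfe : f = e := by
          by_contra hne
          exact hfB (hex f hfX (by simp [hfM, hne]))
        subst hfe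
        cases h f hfX hfM hfB with
        | claim A hA hAM => exact .claim A hA (hAM.trans (Finset.subset_insert _ _))
        | makerMove g hgX hgM hgB' sub =>
          have hgf : g ≠ f := fun hh => hgB' (hh ▸ Finset.mem_insert_self f B)
          have hgB0 : g ∉ B := fun hh => hgB' (Finset.mem_insert_of_mem hh)
          exact absurd (hex g hgX (by simp [hgM, hgf])) hgB0
    exact ⟨part1, fun _ => .makerMove f hfX hfM hfB (part1 f hfB)⟩

lemma MakerWins.toTrue {α : Type} [DecidableEq α] {X : Finset α} {F : Set (Finset α)}
    {M B : Finset α} (h : MakerWins X F false M B) : MakerWins X F true M B :=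
  (makerWins_aux h).2 rfl

lemma MakerWins.exists_mem {α : Type} [DecidableEq α] {X : Finset α} {F : Set (Finset α)}
    {t : Bool} {M B : Finset α} (h : MakerWins X F t M B) : ∃ A, A ∈ F := by
  induction h with
  | claim A hA _ => exact ⟨A, hA⟩
  | makerMove e he hM hB h ih => exact ih
  | breakerMove e he hM hB h ih => exact ih e he hM hB

lemma walk_length_pos_of_ne {V : Type} {G : SimpleGraph V} {s t : V} (W : G.Walk s t)
    (h : s ≠ t) : 0 < W.length := by
  cases W with
  | nil => exact absurd rfl h
  | cons h W => simp

lemma cross_dir {V : Type} {G : SimpleGraph V} {A Bs : Set V} {s t : V} (W : G.Walk s t) :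
    0 < W.length → s ∈ A → t ∈ Bs → (∀ z ∈ W.support, z ∈ A ∨ z ∈ Bs) →
    ∃ x y, x ∈ A ∧ y ∈ Bs ∧ s(x, y) ∈ W.edges := by
  induction W with
  | nil => simp
  | @cons s m t h W ih =>
    intro _ hs ht hcov
    by_cases hm : m ∈ Bs
    · exact ⟨s, m, hs, hm, by simp⟩
    · have hmA : m ∈ A := by
        rcases hcov m (by simp) with h' | h'
        exacts [h', absurd h' hm]
      have hlen : 0 < W.length := by
        cases W with
        | nil => exact absurd ht hm
        | cons h' W' => simp
      obtain ⟨x, y, hx, hy, he⟩ := ih hlen hmA ht (fun z hz => hcov z (by simp [hz]))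
      exact ⟨x, y, hx, hy, by simp [he]⟩

lemma first_edge {V : Type} [DecidableEq V] {G : SimpleGraph V} {a b : V} :
    ∀ {y : V} (R : G.Walk a y), R.support.count a = 1 → s(a, b) ∈ R.edges →
    ∃ (h : G.Adj a b) (R' : G.Walk b y), R = Walk.cons h R' := by
  intro y R
  cases R with
  | nil => simp
  | @cons a m y h R =>
    intro hcount hmem
    have hnot : a ∉ R.support := by
      simp only [Walk.support_cons, List.count_cons_self] at hcount
      have : R.support.count a = 0 := by omega
      exact List.count_eq_zero.1 this
    rcases (by simpa using hmem : s(a, b) = s(a, m) ∨ s(a, b) ∈ R.edges) with heq | hmem'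
    · have hbm : b = m := Sym2.congr_right.1 heq
      subst hbm
      exact ⟨h, R, rfl⟩
    · exact absurd (R.fst_mem_support_of_mem_edges hmem') hnot

lemma split_cycle {V : Type} [DecidableEq V] {G : SimpleGraph V} {c a b : V} (p : G.Walk c c)
    (htail : ∀ z, p.support.tail.count z = 1) (hab : s(a, b) ∈ p.edges) :
    ∃ R : G.Walk a b, (∀ z, R.support.count z = 1) ∧ ∀ e ∈ R.edges, e ∈ p.edges := by
  have ha : a ∈ p.support := p.fst_mem_support_of_mem_edges hab
  have hqe : ∀ e ∈ (p.rotate a ha).edges, e ∈ p.edges :=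
    fun e he => (p.rotate_edges a ha).mem_iff.1 he
  have habq : s(a, b) ∈ (p.rotate a ha).edges := (p.rotate_edges a ha).mem_iff.2 hab
  have hqt : ∀ z, (p.rotate a ha).support.tail.count z = 1 := by
    intro z; rw [(p.support_rotate a ha).perm.count_eq]; exact htail z
  cases hqq : p.rotate a ha with
  | nil => rw [hqq] at habq; simp at habq
  | @cons _ m _ h₁ r =>
    rw [hqq] at habq hqe hqt
    have hrt : ∀ z, r.support.count z = 1 := by
      intro z; have := hqt z; simpa using this
    rcases (by simpa using habq : s(a, b) = s(a, m) ∨ s(a, b) ∈ r.edges) with heq | hin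
    · have hbm : b = m := Sym2.congr_right.1 heq
      subst hbm
      refine ⟨r.reverse, ?_, ?_⟩
      · intro z; rw [Walk.support_reverse, List.count_reverse]; exact hrt z
      · intro e he
        rw [Walk.edges_reverse, List.mem_reverse] at he
        exact hqe e (by simp [he])
    · have hrev1 : r.reverse.support.count a = 1 := by
        rw [Walk.support_reverse, List.count_reverse]; exact hrt a
      have hrevm : s(a, b) ∈ r.reverse.edges := by
        rw [Walk.edges_reverse, List.mem_reverse]; exact hin
      obtain ⟨h₂, R', hR'⟩ := first_edge r.reverse hrev1 hrevm
      have hsup : r.support.reverse = a :: R'.support := by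
        rw [← Walk.support_reverse, hR', Walk.support_cons]
      have hR'c : ∀ z, R'.support.count z = (if z = a then 0 else 1) := by
        intro z
        have h1 : (a :: R'.support).count z = r.support.count z := by
          rw [← hsup, List.count_reverse]
        rw [hrt z] at h1
        by_cases hz : z = a
        · subst hz; simp only [List.count_cons_self] at h1; simp; omega
        · rw [List.count_cons_of_ne (Ne.symm hz)] at h1; simp [hz, h1]
      refine ⟨(R'.concat h₁.symm).reverse, ?_, ?_⟩
      · intro z
        rw [Walk.support_reverse, List.count_reverse, Walk.support_concat,
          List.count_append]
        by_cases hz : z = a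
        · subst hz; simp [hR'c]
        · simp [hR'c, hz, Ne.symm hz]
      · intro e he
        rw [Walk.edges_reverse, List.mem_reverse, Walk.edges_concat,
          List.concat_eq_append, List.mem_append] at he
        rcases he with he | he
        · have h2 : e ∈ r.edges := by
            have h3 : e ∈ r.reverse.edges := by rw [hR']; simp [he]
            simpa [Walk.edges_reverse] using h3
          exact hqe e (by simp [h2])
        · simp only [List.mem_singleton] at he
          subst he
          exact hqe _ (by rw [Walk.edges_cons]; rw [Sym2.eq_swap]; simp)

lemma crossing_full {V : Type} [DecidableEq V] {G : SimpleGraph V} {c : V} (p : G.Walk c c)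
    (htail : ∀ z, p.support.tail.count z = 1) {A Bs : Set V} {a0 b0 : V}
    (hA : a0 ∈ A) (hB : b0 ∈ Bs) (hcov : ∀ z, z ∈ A ∨ z ∈ Bs) :
    ∃ x y, x ∈ A ∧ y ∈ Bs ∧ s(x, y) ∈ p.edges := by
  have ha : a0 ∈ p.support :=
    List.mem_of_mem_tail (List.count_pos_iff.1 (by rw [htail a0]; norm_num))
  have hqe : ∀ e ∈ (p.rotate a0 ha).edges, e ∈ p.edges :=
    fun e he => (p.rotate_edges a0 ha).mem_iff.1 he
  have hqt : ∀ z, (p.rotate a0 ha).support.tail.count z = 1 := by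
    intro z; rw [(p.support_rotate a0 ha).perm.count_eq]; exact htail z
  cases hqq : p.rotate a0 ha with
  | nil => rw [hqq] at hqt; have := hqt a0; simp at this
  | @cons _ m _ h₁ r =>
    rw [hqq] at hqe hqt
    have hrt : ∀ z, r.support.count z = 1 := by
      intro z; have := hqt z; simpa using this
    by_cases hm : m ∈ Bs
    · exact ⟨a0, m, hA, hm, hqe _ (by simp)⟩
    · have hmA : m ∈ A := (hcov m).resolve_right hm
      have hbr : b0 ∈ r.support := List.count_pos_iff.1 (by rw [hrt b0]; norm_num)
      have hne : m ≠ b0 := fun h => hm (h ▸ hB)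
      obtain ⟨x, y, hx, hy, he⟩ := cross_dir (r.takeUntil b0 hbr)
        (walk_length_pos_of_ne _ hne) hmA hB (fun z _ => hcov z)
      exact ⟨x, y, hx, hy, hqe _ (by simp [r.edges_takeUntil_subset hbr he])⟩

lemma crossing_excise {V : Type} [DecidableEq V] [Fintype V] {G : SimpleGraph V} {c : V}
    (p : G.Walk c c) (htail : ∀ z, p.support.tail.count z = 1) {A Bs : Set V} {w a0 b0 : V}
    (hcard : 3 ≤ Fintype.card V) (hwA : w ∉ A) (hwB : w ∉ Bs) (hA : a0 ∈ A) (hB : b0 ∈ Bs)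
    (hcov : ∀ z, z ≠ w → z ∈ A ∨ z ∈ Bs) :
    ∃ x y, x ∈ A ∧ y ∈ Bs ∧ s(x, y) ∈ p.edges := by
  have hw : w ∈ p.support :=
    List.mem_of_mem_tail (List.count_pos_iff.1 (by rw [htail w]; norm_num))
  have hqe : ∀ e ∈ (p.rotate w hw).edges, e ∈ p.edges :=
    fun e he => (p.rotate_edges w hw).mem_iff.1 he
  have hqt : ∀ z, (p.rotate w hw).support.tail.count z = 1 := by
    intro z; rw [(p.support_rotate w hw).perm.count_eq]; exact htail z
  cases hqq : p.rotate w hw with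
  | nil => rw [hqq] at hqt; have := hqt w; simp at this
  | @cons _ m _ h₁ r =>
    rw [hqq] at hqe hqt
    have hrt : ∀ z, r.support.count z = 1 := by
      intro z; have := hqt z; simpa using this
    cases hrr : r.reverse with
    | nil => exact absurd rfl h₁.ne
    | @cons _ z _ h₂ R =>
      have hsup : r.support.reverse = w :: R.support := by
        rw [← Walk.support_reverse, hrr, Walk.support_cons]
      have hRc : ∀ y, R.support.count y = (if y = w then 0 else 1) := by
        intro y
        have h1 : (w :: R.support).count y = r.support.count y := by
          rw [← hsup, List.count_reverse]
        rw [hrt y] at h1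
        by_cases hy : y = w
        · subst hy; simp only [List.count_cons_self] at h1; simp; omega
        · rw [List.count_cons_of_ne (Ne.symm hy)] at h1; simp [hy, h1]
      have hRmem : ∀ y, y ≠ w → y ∈ R.support := by
        intro y hy
        exact List.count_pos_iff.1 (by rw [hRc y]; simp [hy])
      have hRw : w ∉ R.support := by
        intro hmem
        have := List.count_pos_iff.2 hmem
        rw [hRc w] at this; simp at this
      have hcovR : ∀ y ∈ R.support, y ∈ A ∨ y ∈ Bs :=
        fun y hy => hcov y (fun h => hRw (h ▸ hy))
      have hedges : ∀ e ∈ R.edges, e ∈ p.edges := by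
        intro e he
        have h3 : e ∈ r.reverse.edges := by rw [hrr]; simp [he]
        rw [Walk.edges_reverse, List.mem_reverse] at h3
        exact hqe e (by simp [h3])
      have hz : z ∈ A ∨ z ∈ Bs := hcovR z R.start_mem_support
      by_cases hzA : z ∈ A
      · have hbw : b0 ≠ w := fun h => hwB (h ▸ hB)
        have hbmem : b0 ∈ R.support := hRmem b0 hbw
        by_cases hzb : z = b0
        · have hzBs : z ∈ Bs := hzb ▸ hB
          have hd : ∃ d : V, d ≠ w ∧ d ≠ z := by
            by_contra hcon
            push_neg at hcon
            have hsub : (Finset.univ : Finset V) ⊆ {w, z} := by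
              intro d _
              by_cases hdw : d = w
              · simp [hdw]
              · simp [hcon d hdw]
            have h2 := Finset.card_le_card hsub
            have h3 : ({w, z} : Finset V).card ≤ 2 :=
              le_trans (Finset.card_insert_le _ _) (by simp)
            rw [Finset.card_univ] at h2
            omega
          obtain ⟨d, hdw, hdz⟩ := hd
          cases hRR : R with
          | nil =>
            have := hRmem d hdw
            rw [hRR] at this
            simp at this
            exact absurd this hdz
          | @cons _ m₂ _ h₃ R₂ =>
            have hm₂ : m₂ ∈ A ∨ m₂ ∈ Bs := hcovR m₂ (by rw [hRR]; simp)
            have hedge : s(z, m₂) ∈ R.edges := by rw [hRR]; simp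
            rcases hm₂ with hm₂ | hm₂
            · exact ⟨m₂, z, hm₂, hzBs, by rw [Sym2.eq_swap]; exact hedges _ hedge⟩
            · exact ⟨z, m₂, hzA, hm₂, hedges _ hedge⟩
        · obtain ⟨x, y, hx, hy, he⟩ := cross_dir (R.takeUntil b0 hbmem)
            (walk_length_pos_of_ne _ hzb) hzA hB
            (fun y hy => hcovR y (R.support_takeUntil_subset hbmem hy))
          exact ⟨x, y, hx, hy, hedges _ (R.edges_takeUntil_subset hbmem he)⟩
      · have hzB : z ∈ Bs := hz.resolve_left hzA
        have haw : a0 ≠ w := fun h => hwA (h ▸ hA)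
        have hamem : a0 ∈ R.support := hRmem a0 haw
        have hza : z ≠ a0 := fun h => hzA (h ▸ hA)
        obtain ⟨x, y, hx, hy, he⟩ := cross_dir (A := Bs) (Bs := A) (R.takeUntil a0 hamem)
          (walk_length_pos_of_ne _ hza) hzB hA
          (fun y hy => ((hcovR y (R.support_takeUntil_subset hamem hy))).symm)
        exact ⟨y, x, hy, hx, by rw [Sym2.eq_swap]; exact hedges _ (R.edges_takeUntil_subset hamem he)⟩

namespace HamRed

lemma mk_mem_board {m : ℕ} {x y : Fin m} : s(x, y) ∈ Board m ↔ x ≠ y := by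
  simp [Board, SimpleGraph.mem_edgeFinset]

section Setup

variable {n : ℕ} (u v : Fin (n + 2)) (ι : Fin n → Fin (n + 2)) (x₀ y₀ : Fin n)

def sig (e : Sym2 (Fin n)) : Sym2 (Fin (n + 2)) := Sym2.map ι e

def pu (x : Fin n) : Sym2 (Fin (n + 2)) := s(u, ι x)

def pv (x : Fin n) : Sym2 (Fin (n + 2)) := s(v, ι x)

structure Good : Prop where
  huv : u ≠ v
  hιu : ∀ x, ι x ≠ u
  hιv : ∀ x, ι x ≠ v
  hinj : Function.Injective ι
  hsurj : ∀ z, z ≠ u → z ≠ v → ∃ x, ι x = z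
  hxy : x₀ ≠ y₀

def Pair (g b : Sym2 (Fin (n + 2))) : Prop :=
  (∃ x, x ≠ x₀ ∧ x ≠ y₀ ∧ ((g = pu u ι x ∧ b = pv v ι x) ∨ (g = pv v ι x ∧ b = pu u ι x))) ∨
  (g = pu u ι x₀ ∧ b = pu u ι y₀) ∨ (g = pu u ι y₀ ∧ b = pu u ι x₀) ∨
  (g = pv v ι x₀ ∧ b = pv v ι y₀) ∨ (g = pv v ι y₀ ∧ b = pv v ι x₀)

def StarInv (M B : Finset (Sym2 (Fin (n + 2)))) : Prop :=
  ∀ g b, Pair u v ι x₀ y₀ g b → g ∈ B → b ∈ M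

def Resolved (M : Finset (Sym2 (Fin (n + 2)))) : Prop :=
  ∀ g b, Pair u v ι x₀ y₀ g b → g ∈ M ∨ b ∈ M

def Sync (M₀ B₀ : Finset (Sym2 (Fin n))) (M B : Finset (Sym2 (Fin (n + 2)))) : Prop :=
  (∀ f, f ∈ M₀ ↔ sig ι f ∈ M) ∧ (∀ f, f ∈ B₀ ↔ sig ι f ∈ B)

variable {u v ι x₀ y₀}

lemma Good.pu_eq_pu (hG : Good u v ι x₀ y₀) {x x' : Fin n} : pu u ι x = pu u ι x' ↔ x = x' := by
  constructor
  · intro h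
    rcases Sym2.eq_iff.1 h with ⟨-, h2⟩ | ⟨h1, -⟩
    · exact hG.hinj h2
    · exact absurd h1.symm (hG.hιu x')
  · rintro rfl; rfl

lemma Good.pv_eq_pv (hG : Good u v ι x₀ y₀) {x x' : Fin n} : pv v ι x = pv v ι x' ↔ x = x' := by
  constructor
  · intro h
    rcases Sym2.eq_iff.1 h with ⟨-, h2⟩ | ⟨h1, -⟩
    · exact hG.hinj h2
    · exact absurd h1.symm (hG.hιv x')
  · rintro rfl; rfl

lemma Good.pu_ne_pv (hG : Good u v ι x₀ y₀) {x x' : Fin n} : pu u ι x ≠ pv v ι x' := by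
  intro h
  rcases Sym2.eq_iff.1 h with ⟨h1, -⟩ | ⟨h1, -⟩
  · exact hG.huv h1
  · exact hG.hιu x' h1.symm

lemma Good.pu_ne_sig (hG : Good u v ι x₀ y₀) {x : Fin n} {f : Sym2 (Fin n)} :
    pu u ι x ≠ sig ι f := by
  induction f using Sym2.inductionOn with
  | hf c d =>
    intro h
    rcases Sym2.eq_iff.1 h with ⟨h1, -⟩ | ⟨h1, -⟩
    · exact hG.hιu c h1.symm
    · exact hG.hιu d h1.symm

lemma Good.pv_ne_sig (hG : Good u v ι x₀ y₀) {x : Fin n} {f : Sym2 (Fin n)} :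
    pv v ι x ≠ sig ι f := by
  induction f using Sym2.inductionOn with
  | hf c d =>
    intro h
    rcases Sym2.eq_iff.1 h with ⟨h1, -⟩ | ⟨h1, -⟩
    · exact hG.hιv c h1.symm
    · exact hG.hιv d h1.symm

lemma Good.pu_ne_uv (hG : Good u v ι x₀ y₀) {x : Fin n} : pu u ι x ≠ s(u, v) := by
  intro h
  rcases Sym2.eq_iff.1 h with ⟨-, h2⟩ | ⟨h1, -⟩
  · exact hG.hιv x h2
  · exact hG.huv h1

lemma Good.pv_ne_uv (hG : Good u v ι x₀ y₀) {x : Fin n} : pv v ι x ≠ s(u, v) := by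
  intro h
  rcases Sym2.eq_iff.1 h with ⟨h1, -⟩ | ⟨-, h2⟩
  · exact hG.huv h1.symm
  · exact hG.hιu x h2

lemma Good.pu_mem_board (hG : Good u v ι x₀ y₀) {x : Fin n} : pu u ι x ∈ Board (n + 2) :=
  mk_mem_board.2 (fun h => hG.hιu x h.symm)

lemma Good.pv_mem_board (hG : Good u v ι x₀ y₀) {x : Fin n} : pv v ι x ∈ Board (n + 2) :=
  mk_mem_board.2 (fun h => hG.hιv x h.symm)

lemma Good.sig_mem_board (hG : Good u v ι x₀ y₀) {f : Sym2 (Fin n)} :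
    f ∈ Board n ↔ sig ι f ∈ Board (n + 2) := by
  induction f using Sym2.inductionOn with
  | hf c d =>
    show s(c, d) ∈ Board n ↔ s(ι c, ι d) ∈ Board (n + 2)
    rw [mk_mem_board, mk_mem_board]
    exact ⟨fun h hh => h (hG.hinj hh), fun h hh => h (hh ▸ rfl)⟩

lemma Good.sig_inj (hG : Good u v ι x₀ y₀) : Function.Injective (sig ι) :=
  Sym2.map.injective hG.hinj

lemma Good.pair_symm (hG : Good u v ι x₀ y₀) {g b : Sym2 (Fin (n + 2))}
    (h : Pair u v ι x₀ y₀ g b) : Pair u v ι x₀ y₀ b g := by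
  rcases h with ⟨x, h1, h2, ⟨ha, hb⟩ | ⟨ha, hb⟩⟩ | ⟨ha, hb⟩ | ⟨ha, hb⟩ | ⟨ha, hb⟩ | ⟨ha, hb⟩
  · exact Or.inl ⟨x, h1, h2, Or.inr ⟨hb, ha⟩⟩
  · exact Or.inl ⟨x, h1, h2, Or.inl ⟨hb, ha⟩⟩
  · exact Or.inr (Or.inr (Or.inl ⟨hb, ha⟩))
  · exact Or.inr (Or.inl ⟨hb, ha⟩)
  · exact Or.inr (Or.inr (Or.inr (Or.inr ⟨hb, ha⟩)))
  · exact Or.inr (Or.inr (Or.inr (Or.inl ⟨hb, ha⟩)))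

lemma Good.pair_ne (hG : Good u v ι x₀ y₀) {g b : Sym2 (Fin (n + 2))}
    (h : Pair u v ι x₀ y₀ g b) : g ≠ b := by
  rcases h with ⟨x, h1, h2, ⟨rfl, rfl⟩ | ⟨rfl, rfl⟩⟩ | ⟨rfl, rfl⟩ | ⟨rfl, rfl⟩ | ⟨rfl, rfl⟩ | ⟨rfl, rfl⟩
  · exact hG.pu_ne_pv
  · exact fun hh => hG.pu_ne_pv hh.symm
  · exact fun hh => hG.hxy (hG.pu_eq_pu.1 hh)
  · exact fun hh => hG.hxy (hG.pu_eq_pu.1 hh).symm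
  · exact fun hh => hG.hxy (hG.pv_eq_pv.1 hh)
  · exact fun hh => hG.hxy (hG.pv_eq_pv.1 hh).symm

lemma Good.pair_mem_board (hG : Good u v ι x₀ y₀) {g b : Sym2 (Fin (n + 2))}
    (h : Pair u v ι x₀ y₀ g b) : g ∈ Board (n + 2) ∧ b ∈ Board (n + 2) := by
  rcases h with ⟨x, h1, h2, ⟨rfl, rfl⟩ | ⟨rfl, rfl⟩⟩ | ⟨rfl, rfl⟩ | ⟨rfl, rfl⟩ | ⟨rfl, rfl⟩ | ⟨rfl, rfl⟩ <;>
    exact ⟨by first | exact hG.pu_mem_board | exact hG.pv_mem_board,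
      by first | exact hG.pu_mem_board | exact hG.pv_mem_board⟩

lemma Good.pair_ne_sig (hG : Good u v ι x₀ y₀) {g b : Sym2 (Fin (n + 2))}
    (h : Pair u v ι x₀ y₀ g b) (f : Sym2 (Fin n)) : g ≠ sig ι f := by
  rcases h with ⟨x, h1, h2, ⟨rfl, -⟩ | ⟨rfl, -⟩⟩ | ⟨rfl, -⟩ | ⟨rfl, -⟩ | ⟨rfl, -⟩ | ⟨rfl, -⟩ <;>
    first | exact hG.pu_ne_sig | exact hG.pv_ne_sig

lemma Good.pair_ne_uv (hG : Good u v ι x₀ y₀) {g b : Sym2 (Fin (n + 2))}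
    (h : Pair u v ι x₀ y₀ g b) : g ≠ s(u, v) := by
  rcases h with ⟨x, h1, h2, ⟨rfl, -⟩ | ⟨rfl, -⟩⟩ | ⟨rfl, -⟩ | ⟨rfl, -⟩ | ⟨rfl, -⟩ | ⟨rfl, -⟩ <;>
    first | exact hG.pu_ne_uv | exact hG.pv_ne_uv

lemma Good.pu_eq_pv_iff (hG : Good u v ι x₀ y₀) {x x' : Fin n} :
    pu u ι x = pv v ι x' ↔ False := iff_false_intro hG.pu_ne_pv

lemma Good.pv_eq_pu_iff (hG : Good u v ι x₀ y₀) {x x' : Fin n} :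
    pv v ι x = pu u ι x' ↔ False := iff_false_intro (fun h => hG.pu_ne_pv h.symm)

lemma Good.pair_fun (hG : Good u v ι x₀ y₀) {g b b' : Sym2 (Fin (n + 2))}
    (h : Pair u v ι x₀ y₀ g b) (h' : Pair u v ι x₀ y₀ g b') : b = b' := by
  have hxy := hG.hxy
  rcases h with ⟨x, h1, h2, ⟨rfl, rfl⟩ | ⟨rfl, rfl⟩⟩ | ⟨rfl, rfl⟩ | ⟨rfl, rfl⟩ | ⟨rfl, rfl⟩ | ⟨rfl, rfl⟩ <;>
  rcases h' with ⟨x', h1', h2', ⟨he, rfl⟩ | ⟨he, rfl⟩⟩ | ⟨he, rfl⟩ | ⟨he, rfl⟩ | ⟨he, rfl⟩ | ⟨he, rfl⟩ <;>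
  simp_all [hG.pu_eq_pu, hG.pv_eq_pv, hG.pu_eq_pv_iff, hG.pv_eq_pu_iff]


lemma Good.uv_ne_sig (hG : Good u v ι x₀ y₀) {f : Sym2 (Fin n)} : s(u, v) ≠ sig ι f := by
  induction f using Sym2.inductionOn with
  | hf c d =>
    intro h
    rcases Sym2.eq_iff.1 h with ⟨h1, -⟩ | ⟨h1, -⟩
    · exact hG.hιu c h1.symm
    · exact hG.hιu d h1.symm

lemma card_step {α : Type} [DecidableEq α] {X S : Finset α} {e : α} (he : e ∈ X) (heS : e ∉ S) :
    (X \ insert e S).card < (X \ S).card := by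
  apply Finset.card_lt_card
  rw [Finset.ssubset_iff_of_subset (Finset.sdiff_subset_sdiff le_rfl (Finset.subset_insert e S))]
  exact ⟨e, Finset.mem_sdiff.2 ⟨he, heS⟩, fun h => (Finset.mem_sdiff.1 h).2 (Finset.mem_insert_self e S)⟩

lemma card_stepM {α : Type} [DecidableEq α] {X M B : Finset α} {e : α} (he : e ∈ X)
    (heM : e ∉ M) (heB : e ∉ B) :
    (X \ (insert e M ∪ B)).card < (X \ (M ∪ B)).card := by
  rw [Finset.insert_union]
  exact card_step he (by simp [heM, heB])

lemma card_stepB {α : Type} [DecidableEq α] {X M B : Finset α} {e : α} (he : e ∈ X)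
    (heM : e ∉ M) (heB : e ∉ B) :
    (X \ (M ∪ insert e B)).card < (X \ (M ∪ B)).card := by
  rw [Finset.union_insert]
  exact card_step he (by simp [heM, heB])

lemma Good.classify (hG : Good u v ι x₀ y₀) :
    ∀ g ∈ Board (n + 2),
      (∃ f ∈ Board n, g = sig ι f) ∨ g = s(u, v) ∨ ∃ b, Pair u v ι x₀ y₀ g b := by
  have hpu : ∀ x : Fin n, ∃ b, Pair u v ι x₀ y₀ (pu u ι x) b := by
    intro x
    by_cases hx : x = x₀
    · subst hx; exact ⟨pu u ι y₀, Or.inr (Or.inl ⟨rfl, rfl⟩)⟩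
    by_cases hy : x = y₀
    · subst hy; exact ⟨pu u ι x₀, Or.inr (Or.inr (Or.inl ⟨rfl, rfl⟩))⟩
    · exact ⟨pv v ι x, Or.inl ⟨x, hx, hy, Or.inl ⟨rfl, rfl⟩⟩⟩
  have hpv : ∀ x : Fin n, ∃ b, Pair u v ι x₀ y₀ (pv v ι x) b := by
    intro x
    by_cases hx : x = x₀
    · subst hx; exact ⟨pv v ι y₀, Or.inr (Or.inr (Or.inr (Or.inl ⟨rfl, rfl⟩)))⟩
    by_cases hy : x = y₀
    · subst hy; exact ⟨pv v ι x₀, Or.inr (Or.inr (Or.inr (Or.inr ⟨rfl, rfl⟩)))⟩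
    · exact ⟨pu u ι x, Or.inl ⟨x, hx, hy, Or.inr ⟨rfl, rfl⟩⟩⟩
  intro g
  induction g using Sym2.inductionOn with
  | hf c d =>
    intro hg
    have hcd : c ≠ d := mk_mem_board.1 hg
    by_cases hcu : c = u
    · subst hcu
      by_cases hdv : d = v
      · subst hdv; exact Or.inr (Or.inl rfl)
      · obtain ⟨x, rfl⟩ := hG.hsurj d (Ne.symm hcd) hdv
        exact Or.inr (Or.inr (hpu x))
    by_cases hcv : c = v
    · subst hcv
      by_cases hdu : d = u
      · subst hdu; exact Or.inr (Or.inl Sym2.eq_swap)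
      · obtain ⟨x, rfl⟩ := hG.hsurj d hdu (Ne.symm hcd)
        exact Or.inr (Or.inr (hpv x))
    by_cases hdu : d = u
    · subst hdu
      obtain ⟨x, rfl⟩ := hG.hsurj c hcu hcv
      obtain ⟨b, hb⟩ := hpu x
      exact Or.inr (Or.inr ⟨b, by rw [Sym2.eq_swap]; exact hb⟩)
    by_cases hdv : d = v
    · subst hdv
      obtain ⟨x, rfl⟩ := hG.hsurj c hcu hcv
      obtain ⟨b, hb⟩ := hpv x
      exact Or.inr (Or.inr ⟨b, by rw [Sym2.eq_swap]; exact hb⟩)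
    · obtain ⟨x, rfl⟩ := hG.hsurj c hcu hcv
      obtain ⟨y, rfl⟩ := hG.hsurj d hdu hdv
      refine Or.inl ⟨s(x, y), mk_mem_board.2 (fun h => hcd (h ▸ rfl)), ?_⟩
      simp [sig]

lemma Good.resolved_win (hG : Good u v ι x₀ y₀) (hn : 3 ≤ n)
    {M : Finset (Sym2 (Fin (n + 2)))} (hres : Resolved u v ι x₀ y₀ M)
    {c : Fin n} {p : (⊤ : SimpleGraph (Fin n)).Walk c c} (hp : p.IsHamiltonianCycle)
    (hpM : ∀ e ∈ p.edges, sig ι e ∈ M) :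
    ∃ A ∈ FixedHamPaths (n + 2) u v, A ⊆ M := by
  classical
  set A : Set (Fin n) := {x | pu u ι x ∈ M} with hAdef
  set Bs : Set (Fin n) := {x | pv v ι x ∈ M} with hBdef
  have htail : ∀ z, p.support.tail.count z = 1 :=
    (Walk.isHamiltonianCycle_iff_isCycle_and_support_count_tail_eq_one.1 hp).2
  have hokA : ∃ x, x ∈ A := by
    rcases hres _ _ (Or.inr (Or.inl ⟨rfl, rfl⟩)) with h | h
    exacts [⟨x₀, h⟩, ⟨y₀, h⟩]
  have hokB : ∃ x, x ∈ Bs := by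
    rcases hres _ _ (Or.inr (Or.inr (Or.inr (Or.inl ⟨rfl, rfl⟩)))) with h | h
    exacts [⟨x₀, h⟩, ⟨y₀, h⟩]
  obtain ⟨a0, ha0⟩ := hokA
  obtain ⟨b0, hb0⟩ := hokB
  have hcovn : ∀ x, x ≠ x₀ → x ≠ y₀ → x ∈ A ∨ x ∈ Bs := by
    intro x h1 h2
    exact hres _ _ (Or.inl ⟨x, h1, h2, Or.inl ⟨rfl, rfl⟩⟩)
  have hcross : ∃ x y, x ∈ A ∧ y ∈ Bs ∧ s(x, y) ∈ p.edges := by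
    by_cases h1 : x₀ ∈ A ∨ x₀ ∈ Bs
    · by_cases h2 : y₀ ∈ A ∨ y₀ ∈ Bs
      · refine crossing_full p htail ha0 hb0 ?_
        intro z
        by_cases hz1 : z = x₀
        · subst hz1; exact h1
        by_cases hz2 : z = y₀
        · subst hz2; exact h2
        · exact hcovn z hz1 hz2
      · push_neg at h2
        refine crossing_excise p htail (by simp [hn]) h2.1 h2.2 ha0 hb0 ?_
        intro z hz
        by_cases hz1 : z = x₀
        · subst hz1; exact h1
        · exact hcovn z hz1 hz
    · push_neg at h1
      refine crossing_excise p htail (by simp [hn]) h1.1 h1.2 ha0 hb0 ?_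
      intro z hz
      by_cases hz2 : z = y₀
      · subst hz2
        rcases hres _ _ (Or.inr (Or.inl ⟨rfl, rfl⟩)) with h | h
        · exact absurd h h1.1
        · exact Or.inl h
      · exact hcovn z hz hz2
  obtain ⟨a, b, haA, hbB, hedge⟩ := hcross
  obtain ⟨R, hRcount, hRedge⟩ := split_cycle p htail hedge
  let ψ : (⊤ : SimpleGraph (Fin n)) →g (⊤ : SimpleGraph (Fin (n + 2))) :=
    ⟨ι, fun {x y} hxy => by
      simp only [SimpleGraph.top_adj] at hxy ⊢
      exact fun h => hxy (hG.hinj h)⟩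
  have hadj1 : (⊤ : SimpleGraph (Fin (n + 2))).Adj u (ι a) := by
    rw [SimpleGraph.top_adj]; exact fun h => hG.hιu a h.symm
  have hadj2 : (⊤ : SimpleGraph (Fin (n + 2))).Adj (ι b) v := by
    rw [SimpleGraph.top_adj]; exact hG.hιv b
  set W : (⊤ : SimpleGraph (Fin (n + 2))).Walk u v :=
    Walk.cons hadj1 ((R.map ψ).concat hadj2) with hWdef
  have hu_not : u ∉ R.support.map ι := by
    simp only [List.mem_map]; rintro ⟨x, -, hx⟩; exact hG.hιu x hx
  have hv_not : v ∉ R.support.map ι := by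
    simp only [List.mem_map]; rintro ⟨x, -, hx⟩; exact hG.hιv x hx
  have hWsup : W.support = u :: (R.support.map ι ++ [v]) := by
    rw [hWdef, Walk.support_cons, Walk.support_concat, Walk.support_map]
    rfl
  have hham : W.IsHamiltonian := by
    intro z
    rw [hWsup]
    by_cases hzu : z = u
    · rw [hzu, List.count_cons_self, List.count_append,
        List.count_eq_zero.2 hu_not, List.count_eq_zero.2 (by simp [hG.huv] : u ∉ [v])]
    by_cases hzv : z = v
    · rw [hzv, List.count_cons_of_ne (fun h => hG.huv h), List.count_append,
        List.count_eq_zero.2 hv_not, List.count_singleton_self]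
    · obtain ⟨x, rfl⟩ := hG.hsurj z hzu hzv
      rw [List.count_cons_of_ne (fun h => hG.hιu x h.symm), List.count_append,
        List.count_map_of_injective _ _ hG.hinj, hRcount x,
        List.count_eq_zero.2 (by simp [fun h => hG.hιv x h] : ι x ∉ [v])]
  have hWedges : ∀ e ∈ W.edges, e ∈ M := by
    intro e he
    rw [hWdef] at he
    rw [Walk.edges_cons, Walk.edges_concat, List.concat_eq_append] at he
    rcases List.mem_cons.1 he with rfl | he
    · exact (by exact haA : pu u ι a ∈ M)
    rcases List.mem_append.1 he with he | he
    · rw [Walk.edges_map] at he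
      obtain ⟨f, hf, rfl⟩ := List.mem_map.1 he
      exact hpM f (hRedge f hf)
    · rw [List.mem_singleton] at he
      subst he
      rw [Sym2.eq_swap]
      exact (by exact hbB : pv v ι b ∈ M)
  exact ⟨W.edges.toFinset, ⟨W, hham, rfl⟩, fun e he => hWedges e (List.mem_toFinset.1 he)⟩


lemma Good.endgame (hG : Good u v ι x₀ y₀) (hn : 3 ≤ n) :
    ∀ k : ℕ, ∀ (M B : Finset (Sym2 (Fin (n + 2)))) (t : Bool),
      (Board (n + 2) \ (M ∪ B)).card = k →
      StarInv u v ι x₀ y₀ M B →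
      (∃ (c : Fin n) (p : (⊤ : SimpleGraph (Fin n)).Walk c c),
        p.IsHamiltonianCycle ∧ ∀ e ∈ p.edges, sig ι e ∈ M) →
      MakerWins (Board (n + 2)) (FixedHamPaths (n + 2) u v) t M B := by
  intro k
  induction k using Nat.strong_induction_on with
  | _ k IH =>
  intro M B t hk hSI hcyc
  by_cases hres : Resolved u v ι x₀ y₀ M
  · obtain ⟨c, p, hp, hpM⟩ := hcyc
    obtain ⟨A, hA, hAM⟩ := hG.resolved_win hn hres hp hpM
    exact .claim A hA hAM
  · simp only [Resolved] at hres
    push_neg at hres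
    obtain ⟨g, b, hPair, hgM, hbM⟩ := hres
    have hgB : g ∉ B := fun h => hbM (hSI g b hPair h)
    have hbB : b ∉ B := fun h => hgM (hSI b g (hG.pair_symm hPair) h)
    have hgX := (hG.pair_mem_board hPair).1
    obtain ⟨c, p, hp, hpM⟩ := hcyc
    cases t with
    | true =>
      refine .makerMove g hgX hgM hgB ?_
      refine IH _ (hk ▸ card_stepM hgX hgM hgB) _ _ _ rfl ?_ ?_
      · exact fun a c' hpa hBa => Finset.mem_insert_of_mem (hSI a c' hpa hBa)
      · exact ⟨c, p, hp, fun e he => Finset.mem_insert_of_mem (hpM e he)⟩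
    | false =>
      refine .breakerMove g hgX hgM hgB ?_
      intro g' hg'X hg'M hg'B
      by_cases hpex : ∃ b', Pair u v ι x₀ y₀ g' b'
      · obtain ⟨b', hPair'⟩ := hpex
        by_cases hb'M : b' ∈ M
        · refine IH _ (hk ▸ card_stepB hg'X hg'M hg'B) _ _ _ rfl ?_ ⟨c, p, hp, hpM⟩
          intro a c' hpa hBa
          rcases Finset.mem_insert.1 hBa with rfl | hBa
          · rw [← hG.pair_fun hPair' hpa]; exact hb'M
          · exact hSI a c' hpa hBa
        · have hb'B : b' ∉ B := fun h => hg'M (hSI b' g' (hG.pair_symm hPair') h)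
          have hg'b' : g' ≠ b' := hG.pair_ne hPair'
          have hb'ins : b' ∉ insert g' B :=
            fun h => (Finset.mem_insert.1 h).elim (fun h2 => hg'b' h2.symm) hb'B
          refine .makerMove b' (hG.pair_mem_board hPair').2 hb'M hb'ins ?_
          refine IH _ ?_ _ _ _ rfl ?_ ?_
          · rw [← hk]
            exact lt_trans (card_stepM (hG.pair_mem_board hPair').2 hb'M hb'ins)
              (card_stepB hg'X hg'M hg'B)
          · intro a c' hpa hBa
            rcases Finset.mem_insert.1 hBa with rfl | hBa
            · rw [← hG.pair_fun hPair' hpa]; exact Finset.mem_insert_self b' M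
            · exact Finset.mem_insert_of_mem (hSI a c' hpa hBa)
          · exact ⟨c, p, hp, fun e he => Finset.mem_insert_of_mem (hpM e he)⟩
      · refine IH _ (hk ▸ card_stepB hg'X hg'M hg'B) _ _ _ rfl ?_ ⟨c, p, hp, hpM⟩
        intro a c' hpa hBa
        rcases Finset.mem_insert.1 hBa with rfl | hBa
        · exact absurd ⟨c', hpa⟩ hpex
        · exact hSI a c' hpa hBa


lemma Good.simphase (hG : Good u v ι x₀ y₀) (hn : 3 ≤ n) :
    ∀ k : ℕ, ∀ (M₀ B₀ : Finset (Sym2 (Fin n))) (M B : Finset (Sym2 (Fin (n + 2)))),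
      (Board (n + 2) \ (M ∪ B)).card = k →
      Sync ι M₀ B₀ M B → StarInv u v ι x₀ y₀ M B →
      MakerWins (Board n) (HamCycles n) false M₀ B₀ →
      MakerWins (Board (n + 2)) (FixedHamPaths (n + 2) u v) false M B := by
  intro k
  induction k using Nat.strong_induction_on with
  | _ k IH =>
  intro M₀ B₀ M B hk hSy hSI hd
  cases hd with
  | claim A hA hAM =>
    obtain ⟨c, p, hp, hAe⟩ := hA
    exact hG.endgame hn _ M B false rfl hSI
      ⟨c, p, hp, fun e he => (hSy.1 e).1 (hAM (hAe ▸ List.mem_toFinset.2 he))⟩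
  | breakerMove e he heM heB hresp =>
    have heX : sig ι e ∈ Board (n + 2) := hG.sig_mem_board.1 he
    have heM' : sig ι e ∉ M := fun h => heM ((hSy.1 e).2 h)
    have heB' : sig ι e ∉ B := fun h => heB ((hSy.2 e).2 h)
    refine .breakerMove (sig ι e) heX heM' heB' ?_
    intro g hgX hgM hgB
    have advance : g ∈ Board (n + 2) → g ∉ M → g ∉ B → (∀ f : Sym2 (Fin n), g ≠ sig ι f) →
        StarInv u v ι x₀ y₀ M (insert g B) →
        MakerWins (Board (n + 2)) (FixedHamPaths (n + 2) u v) true M (insert g B) := by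
      intro hgX hgM hgB hgsig hSI'
      have hd' := MakerWins.toTrue (MakerWins.breakerMove e he heM heB hresp)
      cases hd' with
      | claim A hA hAM =>
        obtain ⟨c, p, hp, hAe⟩ := hA
        exact hG.endgame hn _ M (insert g B) true rfl hSI'
          ⟨c, p, hp, fun e' he' => (hSy.1 e').1 (hAM (hAe ▸ List.mem_toFinset.2 he'))⟩
      | makerMove e' he' he'M he'B hd2 =>
        have h1 : sig ι e' ∈ Board (n + 2) := hG.sig_mem_board.1 he'
        have h2 : sig ι e' ∉ M := fun h => he'M ((hSy.1 e').2 h)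
        have h3 : sig ι e' ∉ insert g B := by
          simp only [Finset.mem_insert]
          rintro (h | h)
          · exact hgsig e' h.symm
          · exact he'B ((hSy.2 e').2 h)
        refine .makerMove (sig ι e') h1 h2 h3 ?_
        refine IH _ ?_ (insert e' M₀) B₀ _ _ rfl ?_ ?_ hd2
        · rw [← hk]
          exact lt_trans (card_stepM h1 h2 h3) (card_stepB hgX hgM hgB)
        · constructor
          · intro f'
            rw [Finset.mem_insert, Finset.mem_insert, hSy.1 f', hG.sig_inj.eq_iff]
          · intro f'
            rw [hSy.2 f', Finset.mem_insert]
            exact ⟨Or.inr, fun hh => hh.resolve_left (fun hh2 => absurd hh2.symm (hgsig f'))⟩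
        · intro a c hpa hBa
          exact Finset.mem_insert_of_mem (hSI' a c hpa hBa)
    rcases hG.classify g hgX with ⟨f, hf, rfl⟩ | hguv | ⟨b, hPair⟩
    · -- Breaker moved an inner edge
      have hfM : f ∉ M₀ := fun h => hgM ((hSy.1 f).1 h)
      have hfB : f ∉ B₀ := fun h => hgB ((hSy.2 f).1 h)
      have hSI' : StarInv u v ι x₀ y₀ M (insert (sig ι f) B) := by
        intro a c hpa hBa
        rcases Finset.mem_insert.1 hBa with rfl | hBa
        · exact absurd rfl (hG.pair_ne_sig hpa f)
        · exact hSI a c hpa hBa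
      cases hresp f hf hfM hfB with
      | claim A hA hAM =>
        obtain ⟨c, p, hp, hAe⟩ := hA
        exact hG.endgame hn _ M (insert (sig ι f) B) true rfl hSI'
          ⟨c, p, hp, fun e' he' => (hSy.1 e').1 (hAM (hAe ▸ List.mem_toFinset.2 he'))⟩
      | makerMove e' he' he'M he'B hd2 =>
        have h1 : sig ι e' ∈ Board (n + 2) := hG.sig_mem_board.1 he'
        have h2 : sig ι e' ∉ M := fun h => he'M ((hSy.1 e').2 h)
        have h3 : sig ι e' ∉ insert (sig ι f) B := by
          simp only [Finset.mem_insert]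
          rintro (h | h)
          · exact he'B (by rw [hG.sig_inj h]; exact Finset.mem_insert_self f B₀)
          · exact he'B (Finset.mem_insert_of_mem ((hSy.2 e').2 h))
        refine .makerMove (sig ι e') h1 h2 h3 ?_
        refine IH _ ?_ (insert e' M₀) (insert f B₀) _ _ rfl ?_ ?_ hd2
        · rw [← hk]
          exact lt_trans (card_stepM h1 h2 h3) (card_stepB hgX hgM hgB)
        · constructor
          · intro f'
            rw [Finset.mem_insert, Finset.mem_insert, hSy.1 f', hG.sig_inj.eq_iff]
          · intro f'
            rw [Finset.mem_insert, Finset.mem_insert, hSy.2 f', hG.sig_inj.eq_iff]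
        · intro a c hpa hBa
          exact Finset.mem_insert_of_mem (hSI' a c hpa hBa)
    · -- Breaker claimed s(u,v)
      subst hguv
      refine advance hgX hgM hgB (fun f => hG.uv_ne_sig) ?_
      intro a c hpa hBa
      rcases Finset.mem_insert.1 hBa with rfl | hBa
      · exact absurd rfl (hG.pair_ne_uv hpa)
      · exact hSI a c hpa hBa
    · -- Breaker claimed a star edge
      by_cases hbM : b ∈ M
      · refine advance hgX hgM hgB (hG.pair_ne_sig hPair) ?_
        intro a c hpa hBa
        rcases Finset.mem_insert.1 hBa with rfl | hBa
        · rw [← hG.pair_fun hPair hpa]; exact hbM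
        · exact hSI a c hpa hBa
      · have hbB : b ∉ B := fun h => hgM (hSI b g (hG.pair_symm hPair) h)
        have hgb : g ≠ b := hG.pair_ne hPair
        have hbins : b ∉ insert g B :=
          fun h => (Finset.mem_insert.1 h).elim (fun h2 => hgb h2.symm) hbB
        refine .makerMove b (hG.pair_mem_board hPair).2 hbM hbins ?_
        refine IH _ ?_ M₀ B₀ _ _ rfl ?_ ?_ (MakerWins.breakerMove e he heM heB hresp)
        · rw [← hk]
          exact lt_trans (card_stepM (hG.pair_mem_board hPair).2 hbM hbins)
            (card_stepB hgX hgM hgB)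
        · constructor
          · intro f'
            rw [hSy.1 f', Finset.mem_insert]
            exact ⟨Or.inr, fun hh => hh.resolve_left
              (fun hh2 => absurd hh2.symm (hG.pair_ne_sig (hG.pair_symm hPair) f'))⟩
          · intro f'
            rw [hSy.2 f', Finset.mem_insert]
            exact ⟨Or.inr, fun hh => hh.resolve_left
              (fun hh2 => absurd hh2.symm (hG.pair_ne_sig hPair f'))⟩
        · intro a c hpa hBa
          rcases Finset.mem_insert.1 hBa with rfl | hBa
          · rw [← hG.pair_fun hPair hpa]; exact Finset.mem_insert_self b M
          · exact Finset.mem_insert_of_mem (hSI a c hpa hBa)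

end Setup

end HamRed

/-- If Maker, as second player, wins the Hamiltonicity game on `K_n`, then Maker,
as second player, wins the Fixed Hamiltonian Path game on `K_{n+2}` for any choice of
the two fixed (distinct) vertices. -/
theorem ham_implies_fixed_ham_path (n : ℕ)
    (h : MakerWinsSecond (Board n) (HamCycles n))
    (u v : Fin (n + 2)) (huv : u ≠ v) :
    MakerWinsSecond (Board (n + 2)) (FixedHamPaths (n + 2) u v) := by
  classical
  obtain ⟨A0, hA0⟩ := MakerWins.exists_mem h
  obtain ⟨c0, p0, hp0, -⟩ := hA0
  have hn : 3 ≤ n := by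
    have h3 := hp0.isCycle.three_le_length
    have htail := (SimpleGraph.Walk.isHamiltonianCycle_iff_isCycle_and_support_count_tail_eq_one.1 hp0).2
    have hnodup : p0.support.tail.Nodup :=
      List.nodup_iff_count_le_one.2 (fun a => le_of_eq (htail a))
    have hlen : p0.support.tail.length ≤ n := by simpa using hnodup.length_le_card
    have hlen2 : p0.support.tail.length = p0.length := by
      rw [List.length_tail, SimpleGraph.Walk.length_support]
      omega
    omega
  have hcard : ({u, v}ᶜ : Finset (Fin (n + 2))).card = n := by
    rw [Finset.card_compl, Finset.card_pair huv]
    simp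
  let ιo := ({u, v}ᶜ : Finset (Fin (n + 2))).orderIsoOfFin hcard
  set ι : Fin n → Fin (n + 2) := fun x => (ιo x : Fin (n + 2)) with hι
  have hmem : ∀ x, (ι x) ∈ ({u, v}ᶜ : Finset (Fin (n + 2))) := fun x => (ιo x).2
  have hιu : ∀ x, ι x ≠ u := by
    intro x
    have := hmem x
    simp only [Finset.mem_compl, Finset.mem_insert, Finset.mem_singleton, not_or] at this
    exact this.1
  have hιv : ∀ x, ι x ≠ v := by
    intro x
    have := hmem x
    simp only [Finset.mem_compl, Finset.mem_insert, Finset.mem_singleton, not_or] at this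
    exact this.2
  have hinj : Function.Injective ι := fun a b hab => ιo.injective (Subtype.ext hab)
  have hsurj : ∀ z, z ≠ u → z ≠ v → ∃ x, ι x = z := by
    intro z h1 h2
    have hz : z ∈ ({u, v}ᶜ : Finset (Fin (n + 2))) := by simp [h1, h2]
    exact ⟨ιo.symm ⟨z, hz⟩, by simp [hι]⟩
  have hG : HamRed.Good u v ι ⟨0, by omega⟩ ⟨1, by omega⟩ :=
    ⟨huv, hιu, hιv, hinj, hsurj, by intro hh; rw [Fin.mk.injEq] at hh; omega⟩
  exact hG.simphase hn _ ∅ ∅ ∅ ∅ rfl ⟨by simp, by simp⟩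
    (fun a c hpa hBa => by simp at hBa) h
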